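/- Define B = {(x_1, x_2, y_1, y_2) ∈ F_p² × F_p² : x_1 y_1 − x_2 y_2 = 0}, and partition B into the set Z = {(0,0,y_1,y_2)} ∪ {(x_1,x_2,0,0)} ∪ {(0,x_2,y_1,0)} ∪ {(x_1,0,0,y_2)} and for each λ ∈ F_p \ {0}, the set B_λ = {(λx, x, y, λy) : x, y ∈ F_p \ {0}}. Then for any function f : F_p \ {0} → F_p, the map φ : B → F_p defined by φ = 0 on Z and φ(x_1,x_2,y_1,y_2) = f(λ)·x_2 y_1 on B_λ is bilinear on B, in the sense that for each fixed (x_1,x_2), the map (y_1,y_2) ↦ φ(x_1,x_2,y_1,y_2) is linear on the subspace {(y_1,y_2) : (x_1,x_2,y_1,y_2) ∈ B}, and symmetrically. -/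
import Mathlib


open scoped BigOperators

/-- `φ` is bilinear on the set `B ⊆ G₁ × G₂`: each one-variable slice is linear where
defined (it respects addition and scalar multiplication of points in the slice). -/
def BilinearOnSet {F : Type*} [Field F] {G₁ G₂ H : Type*}
    [AddCommGroup G₁] [Module F G₁] [AddCommGroup G₂] [Module F G₂]
    [AddCommGroup H] [Module F H]
    (B : Set (G₁ × G₂)) (φ : G₁ → G₂ → H) : Prop :=
  (∀ x y y', (x, y) ∈ B → (x, y') ∈ B → φ x (y + y') = φ x y + φ x y') ∧
  (∀ x (c : F) y, (x, y) ∈ B → φ x (c • y) = c • φ x y) ∧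
  (∀ x x' y, (x, y) ∈ B → (x', y) ∈ B → φ (x + x') y = φ x y + φ x' y) ∧
  (∀ (c : F) x y, (x, y) ∈ B → φ (c • x) y = c • φ x y)

/-- On the bilinear variety `B = {x₁y₁ - x₂y₂ = 0} ⊆ 𝔽_p² × 𝔽_p²`,
for any `f : 𝔽_p \ {0} → 𝔽_p`, the map which is `0` on `Z` and equal to `f(λ)·x₂y₁` on
`B_λ = {(λx, x, y, λy) : x, y ≠ 0}` is bilinear on `B`. -/
theorem phi_f_is_bilinear (p : ℕ) [Fact p.Prime] (f : ZMod p → ZMod p)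
    (B : Set ((ZMod p × ZMod p) × (ZMod p × ZMod p)))
    (hB : B = {q | q.1.1 * q.2.1 - q.1.2 * q.2.2 = 0})
    (Z : Set ((ZMod p × ZMod p) × (ZMod p × ZMod p)))
    (hZ : Z = {q | q.1 = 0} ∪ {q | q.2 = 0} ∪
      {q | q.1.1 = 0 ∧ q.2.2 = 0} ∪ {q | q.1.2 = 0 ∧ q.2.1 = 0})
    (φ : (ZMod p × ZMod p) → (ZMod p × ZMod p) → ZMod p)
    (hφZ : ∀ q ∈ Z, φ q.1 q.2 = 0)
    (hφB : ∀ lam x y : ZMod p, lam ≠ 0 → x ≠ 0 → y ≠ 0 →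
      φ (lam * x, x) (y, lam * y) = f lam * x * y) :
    BilinearOnSet (F := ZMod p) B φ := by
  subst hB hZ
  -- vanishing on Z, in component form
  have hZmem : ∀ x1 x2 y1 y2 : ZMod p,
      ((x1, x2) = (0:ZMod p × ZMod p) ∨ (y1, y2) = (0:ZMod p × ZMod p) ∨
        (x1 = 0 ∧ y2 = 0) ∨ (x2 = 0 ∧ y1 = 0)) →
      φ (x1, x2) (y1, y2) = 0 := by
    intro x1 x2 y1 y2 h
    exact hφZ ((x1, x2), (y1, y2)) (by
      simp only [Set.mem_union, Set.mem_setOf_eq, or_assoc]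
      exact h)
  -- slice formula when the x-part has both coordinates nonzero
  have lemA : ∀ x1 x2 y1 y2 : ZMod p, x1 ≠ 0 → x2 ≠ 0 → x1 * y1 - x2 * y2 = 0 →
      φ (x1, x2) (y1, y2) = f (x1 * x2⁻¹) * x2 * y1 := by
    intro x1 x2 y1 y2 hx1 hx2 hc
    by_cases hy1 : y1 = 0
    · have hy2 : y2 = 0 := by
        have : x2 * y2 = 0 := by linear_combination -hc + x1 * hy1
        exact (mul_eq_zero.mp this).resolve_left hx2
      rw [hy1, hy2, hZmem _ _ _ _ (Or.inr (Or.inl rfl))]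
      ring
    · have hlam : x1 * x2⁻¹ ≠ 0 := mul_ne_zero hx1 (inv_ne_zero hx2)
      have hx : x1 * x2⁻¹ * x2 = x1 := by field_simp
      have hy : x1 * x2⁻¹ * y1 = y2 := by
        field_simp
        linear_combination hc
      have := hφB (x1 * x2⁻¹) x2 y1 hlam hx2 hy1
      rw [hx, hy] at this
      exact this
  -- slice formula when the y-part has both coordinates nonzero
  have lemB : ∀ x1 x2 y1 y2 : ZMod p, y1 ≠ 0 → y2 ≠ 0 → x1 * y1 - x2 * y2 = 0 →
      φ (x1, x2) (y1, y2) = f (y2 * y1⁻¹) * x2 * y1 := by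
    intro x1 x2 y1 y2 hy1 hy2 hc
    by_cases hx2 : x2 = 0
    · have hx1 : x1 = 0 := by
        have : x1 * y1 = 0 := by linear_combination hc + y2 * hx2
        exact (mul_eq_zero.mp this).resolve_right hy1
      rw [hx1, hx2, hZmem _ _ _ _ (Or.inl rfl)]
      ring
    · have hlam : y2 * y1⁻¹ ≠ 0 := mul_ne_zero hy2 (inv_ne_zero hy1)
      have hx : y2 * y1⁻¹ * x2 = x1 := by
        field_simp
        linear_combination -hc
      have hy : y2 * y1⁻¹ * y1 = y2 := by field_simp
      have := hφB (y2 * y1⁻¹) x2 y1 hlam hx2 hy1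
      rw [hx, hy] at this
      exact this
  refine ⟨?_, ?_, ?_, ?_⟩
  · -- additivity in y
    rintro ⟨x1, x2⟩ ⟨y1, y2⟩ ⟨y1', y2'⟩ hm hm'
    simp only [Set.mem_setOf_eq] at hm hm'
    simp only [Prod.mk_add_mk]
    by_cases hx1 : x1 = 0
    · by_cases hx2 : x2 = 0
      · have hx : (x1, x2) = (0 : ZMod p × ZMod p) := by rw [hx1, hx2]; rfl
        rw [hZmem _ _ _ _ (Or.inl hx), hZmem _ _ _ _ (Or.inl hx),
          hZmem _ _ _ _ (Or.inl hx)]; ring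
      · have hy2 : y2 = 0 := by
          have : x2 * y2 = 0 := by linear_combination -hm + y1 * hx1
          exact (mul_eq_zero.mp this).resolve_left hx2
        have hy2' : y2' = 0 := by
          have : x2 * y2' = 0 := by linear_combination -hm' + y1' * hx1
          exact (mul_eq_zero.mp this).resolve_left hx2
        rw [hZmem _ _ _ _ (Or.inr (Or.inr (Or.inl ⟨hx1, hy2⟩))),
          hZmem _ _ _ _ (Or.inr (Or.inr (Or.inl ⟨hx1, hy2'⟩))),
          hZmem _ _ _ _ (Or.inr (Or.inr (Or.inl ⟨hx1, by rw [hy2, hy2']; ring⟩)))]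
        ring
    · by_cases hx2 : x2 = 0
      · have hy1 : y1 = 0 := by
          have : x1 * y1 = 0 := by linear_combination hm + y2 * hx2
          exact (mul_eq_zero.mp this).resolve_left hx1
        have hy1' : y1' = 0 := by
          have : x1 * y1' = 0 := by linear_combination hm' + y2' * hx2
          exact (mul_eq_zero.mp this).resolve_left hx1
        rw [hZmem _ _ _ _ (Or.inr (Or.inr (Or.inr ⟨hx2, hy1⟩))),
          hZmem _ _ _ _ (Or.inr (Or.inr (Or.inr ⟨hx2, hy1'⟩))),
          hZmem _ _ _ _ (Or.inr (Or.inr (Or.inr ⟨hx2, by rw [hy1, hy1']; ring⟩)))]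
        ring
      · rw [lemA _ _ _ _ hx1 hx2 hm, lemA _ _ _ _ hx1 hx2 hm',
          lemA _ _ _ _ hx1 hx2 (by linear_combination hm + hm')]
        ring
  · -- scalar in y
    rintro ⟨x1, x2⟩ c ⟨y1, y2⟩ hm
    simp only [Set.mem_setOf_eq] at hm
    simp only [Prod.smul_mk, smul_eq_mul]
    by_cases hx1 : x1 = 0
    · by_cases hx2 : x2 = 0
      · have hx : (x1, x2) = (0 : ZMod p × ZMod p) := by rw [hx1, hx2]; rfl
        rw [hZmem _ _ _ _ (Or.inl hx), hZmem _ _ _ _ (Or.inl hx)]; ring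
      · have hy2 : y2 = 0 := by
          have : x2 * y2 = 0 := by linear_combination -hm + y1 * hx1
          exact (mul_eq_zero.mp this).resolve_left hx2
        rw [hZmem _ _ _ _ (Or.inr (Or.inr (Or.inl ⟨hx1, hy2⟩))),
          hZmem _ _ _ _ (Or.inr (Or.inr (Or.inl ⟨hx1, by rw [hy2]; ring⟩)))]
        ring
    · by_cases hx2 : x2 = 0
      · have hy1 : y1 = 0 := by
          have : x1 * y1 = 0 := by linear_combination hm + y2 * hx2
          exact (mul_eq_zero.mp this).resolve_left hx1
        rw [hZmem _ _ _ _ (Or.inr (Or.inr (Or.inr ⟨hx2, hy1⟩))),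
          hZmem _ _ _ _ (Or.inr (Or.inr (Or.inr ⟨hx2, by rw [hy1]; ring⟩)))]
        ring
      · rw [lemA _ _ _ _ hx1 hx2 hm,
          lemA _ _ _ _ hx1 hx2 (by linear_combination c * hm)]
        ring
  · -- additivity in x
    rintro ⟨x1, x2⟩ ⟨x1', x2'⟩ ⟨y1, y2⟩ hm hm'
    simp only [Set.mem_setOf_eq] at hm hm'
    simp only [Prod.mk_add_mk]
    by_cases hy1 : y1 = 0
    · by_cases hy2 : y2 = 0
      · have hy : (y1, y2) = (0 : ZMod p × ZMod p) := by rw [hy1, hy2]; rfl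
        rw [hZmem _ _ _ _ (Or.inr (Or.inl hy)), hZmem _ _ _ _ (Or.inr (Or.inl hy)),
          hZmem _ _ _ _ (Or.inr (Or.inl hy))]; ring
      · have hx2 : x2 = 0 := by
          have : x2 * y2 = 0 := by linear_combination -hm + x1 * hy1
          exact (mul_eq_zero.mp this).resolve_right hy2
        have hx2' : x2' = 0 := by
          have : x2' * y2 = 0 := by linear_combination -hm' + x1' * hy1
          exact (mul_eq_zero.mp this).resolve_right hy2
        rw [hZmem _ _ _ _ (Or.inr (Or.inr (Or.inr ⟨hx2, hy1⟩))),
          hZmem _ _ _ _ (Or.inr (Or.inr (Or.inr ⟨hx2', hy1⟩))),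
          hZmem _ _ _ _ (Or.inr (Or.inr (Or.inr ⟨by rw [hx2, hx2']; ring, hy1⟩)))]
        ring
    · by_cases hy2 : y2 = 0
      · have hx1 : x1 = 0 := by
          have : x1 * y1 = 0 := by linear_combination hm + x2 * hy2
          exact (mul_eq_zero.mp this).resolve_right hy1
        have hx1' : x1' = 0 := by
          have : x1' * y1 = 0 := by linear_combination hm' + x2' * hy2
          exact (mul_eq_zero.mp this).resolve_right hy1
        rw [hZmem _ _ _ _ (Or.inr (Or.inr (Or.inl ⟨hx1, hy2⟩))),
          hZmem _ _ _ _ (Or.inr (Or.inr (Or.inl ⟨hx1', hy2⟩))),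
          hZmem _ _ _ _ (Or.inr (Or.inr (Or.inl ⟨by rw [hx1, hx1']; ring, hy2⟩)))]
        ring
      · rw [lemB _ _ _ _ hy1 hy2 hm, lemB _ _ _ _ hy1 hy2 hm',
          lemB _ _ _ _ hy1 hy2 (by linear_combination hm + hm')]
        ring
  · -- scalar in x
    rintro c ⟨x1, x2⟩ ⟨y1, y2⟩ hm
    simp only [Set.mem_setOf_eq] at hm
    simp only [Prod.smul_mk, smul_eq_mul]
    by_cases hy1 : y1 = 0
    · by_cases hy2 : y2 = 0
      · have hy : (y1, y2) = (0 : ZMod p × ZMod p) := by rw [hy1, hy2]; rfl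
        rw [hZmem _ _ _ _ (Or.inr (Or.inl hy)), hZmem _ _ _ _ (Or.inr (Or.inl hy))]
        ring
      · have hx2 : x2 = 0 := by
          have : x2 * y2 = 0 := by linear_combination -hm + x1 * hy1
          exact (mul_eq_zero.mp this).resolve_right hy2
        rw [hZmem _ _ _ _ (Or.inr (Or.inr (Or.inr ⟨hx2, hy1⟩))),
          hZmem _ _ _ _ (Or.inr (Or.inr (Or.inr ⟨by rw [hx2]; ring, hy1⟩)))]
        ring
    · by_cases hy2 : y2 = 0
      · have hx1 : x1 = 0 := by
          have : x1 * y1 = 0 := by linear_combination hm + x2 * hy2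
          exact (mul_eq_zero.mp this).resolve_right hy1
        rw [hZmem _ _ _ _ (Or.inr (Or.inr (Or.inl ⟨hx1, hy2⟩))),
          hZmem _ _ _ _ (Or.inr (Or.inr (Or.inl ⟨by rw [hx1]; ring, hy2⟩)))]
        ring
      · rw [lemB _ _ _ _ hy1 hy2 hm,
          lemB _ _ _ _ hy1 hy2 (by linear_combination c * hm)]
        ring
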